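/- Let Σ be a complete simplicial fan in N_ℚ with n rays generated by b̄_1,…,b̄_n. The subring S_Σ of the deformed group ring generated by y^{b_1},…,y^{b_n} is isomorphic as a graded ring to the Stanley-Reisner ring ℚ[x_1,…,x_n]/I_Σ, where I_Σ is generated by the square-free monomials x_{i₁}⋯x_{i_s} such that ρ_{i₁} + ⋯ + ρ_{i_s} is not a cone of Σ. -/

import Mathlib

/-- The (simplicial) cone in `V` spanned by the rays `w i`, `i ∈ S`. -/
def coneOf {V : Type} [AddCommGroup V] [Module ℚ V] {n : ℕ}
    (w : Fin n → V) (S : Finset (Fin n)) : Set V :=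
  {x | ∃ q : Fin n → ℚ, (∀ i, 0 ≤ q i) ∧ (∀ i, i ∉ S → q i = 0) ∧
    x = ∑ i, q i • w i}

/-- The multiplication of the deformed group ring `ℚ[N]^Σ`: on the ℚ-vector space
`⊕_{c ∈ N} ℚ·y^c = (N →₀ ℚ)` it is given on monomials by
`y^{c₁} · y^{c₂} = y^{c₁+c₂}` if `bar c₁` and `bar c₂` lie in a common cone of the
fan (with cones `coneOf w S`, `S ∈ Δ`), and `0` otherwise. -/
noncomputable def dmul {N V : Type} [AddCommGroup N] [AddCommGroup V] [Module ℚ V]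
    {n : ℕ} (bar : N →+ V) (w : Fin n → V) (Δ : Finset (Finset (Fin n)))
    (f g : N →₀ ℚ) : N →₀ ℚ :=
  open Classical in
  f.sum fun c₁ a => g.sum fun c₂ b =>
    if ∃ S ∈ Δ, bar c₁ ∈ coneOf w S ∧ bar c₂ ∈ coneOf w S then
      Finsupp.single (c₁ + c₂) (a * b)
    else 0


/-- The subring `S_Σ ⊆ ℚ[N]^Σ` generated by the monomials `y^{b i}`: its underlying
`ℚ`-vector space is spanned by the monomials `y^{∑ k i • b i}` whose support
`{i | k i ≠ 0}` lies in a cone of the fan. -/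
noncomputable def SRing {N : Type} [AddCommGroup N] {n : ℕ}
    (b : Fin n → N) (Δ : Finset (Finset (Fin n))) : Submodule ℚ (N →₀ ℚ) :=
  Submodule.span ℚ {f | ∃ k : Fin n → ℕ, (∃ S ∈ Δ, ∀ i, k i ≠ 0 → i ∈ S) ∧
    f = Finsupp.single (∑ i, k i • b i) 1}

/-- The Stanley-Reisner ideal `I_Σ` of the fan with cone index sets `Δ`: the ideal
generated by the square-free monomials `∏_{i ∈ S} x_i` for which `S` is not (contained
in) a cone of `Σ`. -/
noncomputable def srIdeal {n : ℕ} (Δ : Finset (Finset (Fin n))) : Ideal (MvPolynomial (Fin n) ℚ) :=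
  Ideal.span {p | ∃ S : Finset (Fin n), S ∉ Δ ∧ p = ∏ i ∈ S, MvPolynomial.X i}

namespace SR10

open MvPolynomial
open scoped Classical

variable {N V : Type} [AddCommGroup N] [AddCommGroup V] [Module ℚ V]
variable {n : ℕ}

/-- Support condition: the support of the exponent vector lies in a cone of the fan. -/
def cond (Δ : Finset (Finset (Fin n))) (m : Fin n →₀ ℕ) : Prop :=
  ∃ S ∈ Δ, ∀ i, m i ≠ 0 → i ∈ S

/-- The lattice point `∑ m i • b i`. -/
def σm (b : Fin n → N) (m : Fin n →₀ ℕ) : N := ∑ i, m i • b i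

lemma σm_add (b : Fin n → N) (m m' : Fin n →₀ ℕ) : σm b (m + m') = σm b m + σm b m' := by
  simp [σm, add_smul, Finset.sum_add_distrib]

lemma cond_left {Δ : Finset (Finset (Fin n))} {m m' : Fin n →₀ ℕ}
    (h : cond Δ (m + m')) : cond Δ m := by
  obtain ⟨S, hS, hsup⟩ := h
  exact ⟨S, hS, fun i hi => hsup i (by simp only [Finsupp.add_apply]; omega)⟩

lemma cond_right {Δ : Finset (Finset (Fin n))} {m m' : Fin n →₀ ℕ}
    (h : cond Δ (m + m')) : cond Δ m' := by
  rw [add_comm] at h; exact cond_left h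

/-- The basic linear map `ℚ[x] → (N →₀ ℚ)`. -/
noncomputable def φ (b : Fin n → N) (Δ : Finset (Finset (Fin n))) :
    MvPolynomial (Fin n) ℚ →ₗ[ℚ] (N →₀ ℚ) :=
  (MvPolynomial.basisMonomials (Fin n) ℚ).constr ℚ
    fun m => if cond Δ m then Finsupp.single (σm b m) 1 else 0

lemma basis_eq (m : Fin n →₀ ℕ) :
    (MvPolynomial.basisMonomials (Fin n) ℚ) m = MvPolynomial.monomial m 1 :=
  congrFun (MvPolynomial.coe_basisMonomials _ _) m

lemma φ_monomial (b : Fin n → N) (Δ : Finset (Finset (Fin n))) (m : Fin n →₀ ℕ) :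
    φ b Δ (monomial m 1) = if cond Δ m then Finsupp.single (σm b m) 1 else 0 := by
  rw [← basis_eq]
  exact (MvPolynomial.basisMonomials (Fin n) ℚ).constr_basis ℚ _ m

section fan

variable (bar : N →+ V) (b : Fin n → N) (w : Fin n → V) (Δ : Finset (Finset (Fin n)))

lemma bar_σm (hw : w = fun i => bar (b i)) (m : Fin n →₀ ℕ) :
    bar (σm b m) = ∑ i, (m i : ℚ) • w i := by
  rw [σm, map_sum]
  refine Finset.sum_congr rfl fun i _ => ?_
  rw [map_nsmul, hw, Nat.cast_smul_eq_nsmul]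

variable {w Δ}

lemma rep_unique (hind : ∀ S ∈ Δ, LinearIndependent ℚ fun i : S => w i.1)
    {S : Finset (Fin n)} (hS : S ∈ Δ) {p q : Fin n → ℚ}
    (hp : ∀ i ∉ S, p i = 0) (hq : ∀ i ∉ S, q i = 0)
    (h : ∑ i, p i • w i = ∑ i, q i • w i) : p = q := by
  have h0 : ∑ i, (p i - q i) • w i = 0 := by
    have hh := sub_eq_zero_of_eq h
    rw [← Finset.sum_sub_distrib] at hh
    simpa [sub_smul] using hh
  have h1 : ∑ i ∈ S, (p i - q i) • w i = 0 := by
    rw [← h0]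
    exact Finset.sum_subset (Finset.subset_univ S)
      (fun i _ hi => by rw [hp i hi, hq i hi]; simp)
  have h2 : ∑ i : S, (p i.1 - q i.1) • w i.1 = 0 := by
    rw [Finset.univ_eq_attach, Finset.sum_attach S (fun i => (p i - q i) • w i)]
    exact h1
  have hz := Fintype.linearIndependent_iff.mp (hind S hS) (fun i => p i.1 - q i.1) h2
  funext i
  by_cases hi : i ∈ S
  · have := hz ⟨i, hi⟩; simpa [sub_eq_zero] using this
  · rw [hp i hi, hq i hi]

lemma supp_in (hind : ∀ S ∈ Δ, LinearIndependent ℚ fun i : S => w i.1)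
    (hglue : ∀ S ∈ Δ, ∀ T ∈ Δ, coneOf w S ∩ coneOf w T = coneOf w (S ∩ T))
    {S T : Finset (Fin n)} (hS : S ∈ Δ) (hT : T ∈ Δ) {p : Fin n → ℚ}
    (hp0 : ∀ i, 0 ≤ p i) (hpS : ∀ i ∉ S, p i = 0)
    (hx : ∑ i, p i • w i ∈ coneOf w T) : ∀ i ∉ T, p i = 0 := by
  have hmem : ∑ i, p i • w i ∈ coneOf w S ∩ coneOf w T := ⟨⟨p, hp0, hpS, rfl⟩, hx⟩
  rw [hglue S hS T hT] at hmem
  obtain ⟨q, hq0, hqST, hqeq⟩ := hmem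
  have hpq : p = q := by
    refine rep_unique hind hS hpS (fun i hi => hqST i ?_) hqeq
    simp only [Finset.mem_inter]; tauto
  intro i hi
  rw [hpq]
  exact hqST i (by simp only [Finset.mem_inter]; tauto)

lemma nat_zeros {m : Fin n →₀ ℕ} {S : Finset (Fin n)}
    (h : ∀ i, m i ≠ 0 → i ∈ S) : ∀ i ∉ S, ((m i : ℚ)) = 0 := by
  intro i hi
  have : m i = 0 := by by_contra hne; exact hi (h i hne)
  simp [this]

lemma σm_mem_cone (hw : w = fun i => bar (b i)) {m : Fin n →₀ ℕ} {S : Finset (Fin n)}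
    (h : ∀ i, m i ≠ 0 → i ∈ S) : bar (σm b m) ∈ coneOf w S := by
  rw [bar_σm bar b w hw]
  exact ⟨fun i => (m i : ℚ), fun i => by positivity, nat_zeros h, rfl⟩

/-- Injectivity of `m ↦ σm b m` on good exponent vectors. -/
lemma σm_inj (hw : w = fun i => bar (b i))
    (hind : ∀ S ∈ Δ, LinearIndependent ℚ fun i : S => w i.1)
    (hglue : ∀ S ∈ Δ, ∀ T ∈ Δ, coneOf w S ∩ coneOf w T = coneOf w (S ∩ T))
    {m m' : Fin n →₀ ℕ} (hm : cond Δ m) (hm' : cond Δ m')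
    (h : σm b m = σm b m') : m = m' := by
  obtain ⟨S, hS, hmS⟩ := hm
  obtain ⟨S', hS', hmS'⟩ := hm'
  have hb : ∑ i, ((m i : ℚ)) • w i = ∑ i, ((m' i : ℚ)) • w i := by
    rw [← bar_σm bar b w hw, ← bar_σm bar b w hw, h]
  have hx : ∑ i, ((m i : ℚ)) • w i ∈ coneOf w S' := by
    rw [hb]
    exact ⟨fun i => (m' i : ℚ), fun i => by positivity, nat_zeros hmS', rfl⟩
  have hz : ∀ i ∉ S', ((m i : ℚ)) = 0 :=
    supp_in hind hglue hS hS' (fun i => by positivity) (nat_zeros hmS) hx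
  have hfin : (fun i => ((m i : ℚ))) = fun i => ((m' i : ℚ)) :=
    rep_unique hind hS' hz (nat_zeros hmS') hb
  ext i
  exact_mod_cast congrFun hfin i

/-- The membership condition for the product. -/
lemma cond_add_iff (hw : w = fun i => bar (b i))
    (hind : ∀ S ∈ Δ, LinearIndependent ℚ fun i : S => w i.1)
    (hglue : ∀ S ∈ Δ, ∀ T ∈ Δ, coneOf w S ∩ coneOf w T = coneOf w (S ∩ T))
    {m m' : Fin n →₀ ℕ} (hm : cond Δ m) (hm' : cond Δ m') :
    cond Δ (m + m') ↔
      ∃ S ∈ Δ, bar (σm b m) ∈ coneOf w S ∧ bar (σm b m') ∈ coneOf w S := by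
  constructor
  · rintro ⟨S, hS, hsup⟩
    refine ⟨S, hS, σm_mem_cone bar b hw fun i hi => ?_, σm_mem_cone bar b hw fun i hi => ?_⟩
    · exact hsup i (by simp only [Finsupp.add_apply]; omega)
    · exact hsup i (by simp only [Finsupp.add_apply]; omega)
  · rintro ⟨S, hS, h1, h2⟩
    obtain ⟨Sm, hSm, hmS⟩ := hm
    obtain ⟨Sm', hSm', hmS'⟩ := hm'
    rw [bar_σm bar b w hw] at h1 h2
    have hz1 : ∀ i ∉ S, ((m i : ℚ)) = 0 :=
      supp_in hind hglue hSm hS (fun i => by positivity) (nat_zeros hmS) h1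
    have hz2 : ∀ i ∉ S, ((m' i : ℚ)) = 0 :=
      supp_in hind hglue hSm' hS (fun i => by positivity) (nat_zeros hmS') h2
    refine ⟨S, hS, fun i hi => ?_⟩
    by_contra hiS
    have e1 := hz1 i hiS
    have e2 := hz2 i hiS
    apply hi
    simp only [Finsupp.add_apply]
    have : m i = 0 := by exact_mod_cast e1
    have : m' i = 0 := by exact_mod_cast e2
    omega

end fan

section bilin

variable (bar : N →+ V) (w : Fin n → V) (Δ : Finset (Finset (Fin n)))

/-- The monomial product in the deformed group ring. -/
noncomputable def u (c₁ c₂ : N) : N →₀ ℚ :=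
  if ∃ S ∈ Δ, bar c₁ ∈ coneOf w S ∧ bar c₂ ∈ coneOf w S then
    Finsupp.single (c₁ + c₂) 1 else 0

/-- The deformed product as a bilinear map. -/
noncomputable def D : (N →₀ ℚ) →ₗ[ℚ] (N →₀ ℚ) →ₗ[ℚ] (N →₀ ℚ) :=
  Finsupp.lsum ℚ fun c₁ =>
    LinearMap.toSpanSingleton ℚ _
      (Finsupp.lsum ℚ fun c₂ => LinearMap.toSpanSingleton ℚ _ (u bar w Δ c₁ c₂))

lemma D_single_single (c₁ c₂ : N) (a a' : ℚ) :
    D bar w Δ (Finsupp.single c₁ a) (Finsupp.single c₂ a') = a • a' • u bar w Δ c₁ c₂ := by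
  simp [D, Finsupp.lsum_single, LinearMap.toSpanSingleton_apply]

lemma dmul_eq_D (f g : N →₀ ℚ) : dmul bar w Δ f g = D bar w Δ f g := by
  rw [dmul, D, Finsupp.lsum_apply, LinearMap.finsupp_sum_apply]
  refine Finsupp.sum_congr fun c₁ _ => ?_
  rw [LinearMap.toSpanSingleton_apply, LinearMap.smul_apply, Finsupp.lsum_apply,
    Finsupp.smul_sum]
  refine Finsupp.sum_congr fun c₂ _ => ?_
  rw [LinearMap.toSpanSingleton_apply, u]
  split_ifs with hP
  · simp [Finsupp.smul_single, mul_comm]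
  · simp

end bilin


section mult

variable (bar : N →+ V) (b : Fin n → N) (w : Fin n → V) (Δ : Finset (Finset (Fin n)))

lemma key_mono (hw : w = fun i => bar (b i))
    (hind : ∀ S ∈ Δ, LinearIndependent ℚ fun i : S => w i.1)
    (hglue : ∀ S ∈ Δ, ∀ T ∈ Δ, coneOf w S ∩ coneOf w T = coneOf w (S ∩ T))
    (m m' : Fin n →₀ ℕ) :
    φ b Δ (monomial m 1 * monomial m' 1) =
      D bar w Δ (φ b Δ (monomial m 1)) (φ b Δ (monomial m' 1)) := by
  rw [monomial_mul, one_mul, φ_monomial, φ_monomial, φ_monomial]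
  by_cases hm : cond Δ m
  · by_cases hm' : cond Δ m'
    · rw [if_pos hm, if_pos hm', D_single_single, one_smul, one_smul, u]
      by_cases hP : ∃ S ∈ Δ, bar (σm b m) ∈ coneOf w S ∧ bar (σm b m') ∈ coneOf w S
      · rw [if_pos hP, if_pos ((cond_add_iff bar b hw hind hglue hm hm').mpr hP), σm_add]
      · rw [if_neg hP, if_neg fun hc => hP ((cond_add_iff bar b hw hind hglue hm hm').mp hc)]
    · rw [if_neg hm', if_neg (fun hc => hm' (cond_right hc))]
      simp
  · rw [if_neg hm, if_neg (fun hc => hm (cond_left hc))]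
    simp

lemma φ_mul (hw : w = fun i => bar (b i))
    (hind : ∀ S ∈ Δ, LinearIndependent ℚ fun i : S => w i.1)
    (hglue : ∀ S ∈ Δ, ∀ T ∈ Δ, coneOf w S ∩ coneOf w T = coneOf w (S ∩ T))
    (x x' : MvPolynomial (Fin n) ℚ) :
    φ b Δ (x * x') = D bar w Δ (φ b Δ x) (φ b Δ x') := by
  have step1 : ∀ (m : Fin n →₀ ℕ) (y : MvPolynomial (Fin n) ℚ),
      φ b Δ (monomial m 1 * y) = D bar w Δ (φ b Δ (monomial m 1)) (φ b Δ y) := by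
    intro m
    have hcomp : (φ b Δ).comp (LinearMap.mulLeft ℚ (monomial m 1 : MvPolynomial (Fin n) ℚ)) =
        (D bar w Δ (φ b Δ (monomial m 1))).comp (φ b Δ) := by
      refine (MvPolynomial.basisMonomials (Fin n) ℚ).ext fun m' => ?_
      rw [basis_eq]
      simpa using key_mono bar b w Δ hw hind hglue m m'
    intro y
    simpa using LinearMap.congr_fun hcomp y
  have hcomp : (φ b Δ).comp (LinearMap.mulRight ℚ x') =
      ((D bar w Δ).flip (φ b Δ x')).comp (φ b Δ) := by
    refine (MvPolynomial.basisMonomials (Fin n) ℚ).ext fun m => ?_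
    rw [basis_eq]
    simpa using step1 m x'
  simpa using LinearMap.congr_fun hcomp x

end mult

section kerrange

variable (b : Fin n → N) (Δ : Finset (Finset (Fin n)))

lemma indicator_apply (S : Finset (Fin n)) (i : Fin n) :
    ((∑ j ∈ S, Finsupp.single j 1 : Fin n →₀ ℕ)) i = if i ∈ S then 1 else 0 := by
  rw [Finsupp.finset_sum_apply]
  simp [Finsupp.single_apply, Finset.sum_ite_eq]

lemma prod_X_eq (S : Finset (Fin n)) :
    (∏ i ∈ S, (X i : MvPolynomial (Fin n) ℚ)) =
      monomial (∑ j ∈ S, Finsupp.single j 1) 1 := by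
  induction S using Finset.induction with
  | empty => simp
  | insert _ _ hns ih =>
    rw [Finset.prod_insert hns, ih, Finset.sum_insert hns, X, monomial_mul, one_mul]

lemma φ_vanish_gen (hdown : ∀ S ∈ Δ, ∀ T ⊆ S, T ∈ Δ)
    (r : MvPolynomial (Fin n) ℚ) {S : Finset (Fin n)} (hS : S ∉ Δ) :
    φ b Δ (r * ∏ i ∈ S, X i) = 0 := by
  have hcomp : (φ b Δ).comp
      (LinearMap.mulRight ℚ (∏ i ∈ S, (X i : MvPolynomial (Fin n) ℚ))) = 0 := by
    refine (MvPolynomial.basisMonomials (Fin n) ℚ).ext fun m => ?_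
    rw [basis_eq]
    simp only [LinearMap.comp_apply, LinearMap.mulRight_apply, LinearMap.zero_apply]
    rw [prod_X_eq, monomial_mul, mul_one, φ_monomial, if_neg]
    rintro ⟨T, hT, hsup⟩
    refine hS (hdown T hT S fun i hi => ?_)
    refine hsup i ?_
    simp [Finsupp.add_apply, indicator_apply, hi]
  simpa using LinearMap.congr_fun hcomp r

lemma srIdeal_le_ker (hdown : ∀ S ∈ Δ, ∀ T ⊆ S, T ∈ Δ) :
    ∀ x ∈ srIdeal Δ, φ b Δ x = 0 := by
  intro x hx
  rw [srIdeal] at hx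
  obtain ⟨c, hc, rfl⟩ := Submodule.mem_span_set.mp hx
  rw [map_finsuppSum]
  rw [Finsupp.sum]
  refine Finset.sum_eq_zero fun g hg => ?_
  obtain ⟨S, hS, rfl⟩ := hc hg
  rw [smul_eq_mul]
  exact φ_vanish_gen b Δ hdown _ hS

lemma bad_monomial_mem {m : Fin n →₀ ℕ} (hm : ¬ cond Δ m) :
    monomial m (1:ℚ) ∈ srIdeal Δ := by
  have hS : m.support ∉ Δ := fun h =>
    hm ⟨m.support, h, fun i hi => Finsupp.mem_support_iff.mpr hi⟩
  have hgen : (∏ i ∈ m.support, (X i : MvPolynomial (Fin n) ℚ)) ∈ srIdeal Δ :=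
    Ideal.subset_span ⟨m.support, hS, rfl⟩
  have heq : monomial m (1:ℚ) =
      monomial (m - ∑ j ∈ m.support, Finsupp.single j 1) 1 * ∏ i ∈ m.support, X i := by
    have harg : (m - ∑ j ∈ m.support, Finsupp.single j 1) +
        ∑ j ∈ m.support, Finsupp.single j 1 = m := by
      ext i
      rw [Finsupp.add_apply, Finsupp.tsub_apply, indicator_apply]
      by_cases hi : i ∈ m.support
      · have hne : m i ≠ 0 := Finsupp.mem_support_iff.mp hi
        simp only [hi, if_pos]
        omega
      · simp [hi]
    rw [prod_X_eq, monomial_mul, mul_one, harg]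
  rw [heq]
  exact Ideal.mul_mem_left _ _ hgen

variable (bar : N →+ V) (w : Fin n → V)

lemma ker_le_srIdeal (hw : w = fun i => bar (b i))
    (hind : ∀ S ∈ Δ, LinearIndependent ℚ fun i : S => w i.1)
    (hglue : ∀ S ∈ Δ, ∀ T ∈ Δ, coneOf w S ∩ coneOf w T = coneOf w (S ∩ T)) :
    ∀ x, φ b Δ x = 0 → x ∈ srIdeal Δ := by
  intro x hx
  have hcoeff : ∀ m₀, cond Δ m₀ → coeff m₀ x = 0 := by
    intro m₀ h0
    have expand : φ b Δ x = ∑ m ∈ x.support,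
        coeff m x • (if cond Δ m then Finsupp.single (σm b m) (1:ℚ) else 0) := by
      conv_lhs => rw [x.as_sum]
      rw [map_sum]
      refine Finset.sum_congr rfl fun m _ => ?_
      rw [← φ_monomial b Δ m, ← map_smul]
      congr 1
      rw [MvPolynomial.smul_monomial, smul_eq_mul, mul_one]
    have hval : ∀ m, ((if cond Δ m then Finsupp.single (σm b m) (1:ℚ) else 0) : N →₀ ℚ)
        (σm b m₀) = if m = m₀ then 1 else 0 := by
      intro m
      by_cases hc : cond Δ m
      · rw [if_pos hc, Finsupp.single_apply]
        by_cases he : σm b m = σm b m₀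
        · rw [if_pos he, if_pos (σm_inj bar b hw hind hglue hc h0 he)]
        · rw [if_neg he, if_neg (fun hmm => he (by rw [hmm]))]
      · rw [if_neg hc, if_neg (fun hmm => hc (by rw [hmm]; exact h0))]
        rfl
    have heval : (φ b Δ x) (σm b m₀) = coeff m₀ x := by
      rw [expand, Finsupp.finset_sum_apply]
      rw [Finset.sum_congr rfl (fun m _ => by rw [Finsupp.smul_apply, hval m, smul_eq_mul])]
      simp only [mul_ite, mul_one, mul_zero]
      rw [Finset.sum_ite_eq' x.support m₀ (fun m => coeff m x)]
      split_ifs with h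
      · rfl
      · exact (MvPolynomial.notMem_support_iff.mp h).symm
    rw [hx] at heval
    exact heval.symm
  rw [x.as_sum]
  refine Submodule.sum_mem _ fun m hm => ?_
  by_cases hc : cond Δ m
  · rw [hcoeff m hc, monomial_zero]
    exact Submodule.zero_mem _
  · have : (monomial m (coeff m x) : MvPolynomial (Fin n) ℚ) = C (coeff m x) * monomial m 1 := by
      rw [C_mul_monomial, mul_one]
    rw [this]
    exact Ideal.mul_mem_left _ _ (bad_monomial_mem Δ hc)

lemma φ_symm_apply (k : Fin n → ℕ) :
    φ b Δ (monomial (Finsupp.equivFunOnFinite.symm k) 1) =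
      if (∃ S ∈ Δ, ∀ i, k i ≠ 0 → i ∈ S) then
        Finsupp.single (∑ i, k i • b i) (1:ℚ) else 0 := by
  rw [φ_monomial]
  have hco : ∀ i, (Finsupp.equivFunOnFinite.symm k) i = k i := fun i =>
    rfl
  have hcond : cond Δ (Finsupp.equivFunOnFinite.symm k) ↔
      (∃ S ∈ Δ, ∀ i, k i ≠ 0 → i ∈ S) := by
    unfold cond
    simp only [hco]
  have hσ : σm b (Finsupp.equivFunOnFinite.symm k) = ∑ i, k i • b i :=
    Finset.sum_congr rfl fun i _ => by rw [hco]
  rw [hσ, if_congr hcond rfl rfl]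

lemma φ_mem_SRing : ∀ x, φ b Δ x ∈ SRing b Δ := by
  intro x
  have htop : (⊤ : Submodule ℚ (MvPolynomial (Fin n) ℚ)) ≤
      Submodule.comap (φ b Δ) (SRing b Δ) := by
    rw [← (MvPolynomial.basisMonomials (Fin n) ℚ).span_eq]
    refine Submodule.span_le.mpr ?_
    rintro _ ⟨m, rfl⟩
    rw [SetLike.mem_coe, Submodule.mem_comap, basis_eq, φ_monomial]
    by_cases hc : cond Δ m
    · rw [if_pos hc]
      exact Submodule.subset_span ⟨fun i => m i, hc, rfl⟩
    · rw [if_neg hc]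
      exact Submodule.zero_mem _
  exact htop trivial

lemma SRing_le_range : SRing b Δ ≤ LinearMap.range (φ b Δ) := by
  rw [SRing]
  refine Submodule.span_le.mpr ?_
  rintro f ⟨k, hk, rfl⟩
  refine ⟨monomial (Finsupp.equivFunOnFinite.symm k) 1, ?_⟩
  rw [φ_symm_apply, if_pos hk]

end kerrange

end SR10

/-- **`S_Σ` is the Stanley-Reisner ring of `Σ`.**  For a complete simplicial fan with
rays `w i = bar (b i)`, the subring `S_Σ` of the deformed group ring generated by the
monomials `y^{b i}` is isomorphic, as a graded ring, to
`ℚ[x_1, …, x_n]/I_Σ`, via `x_i ↦ y^{b i}`; explicitly, the isomorphism sends the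
class of the monomial `x^k` to `y^{∑ k i • b i}` when the support of `k` lies in a
cone of `Σ`, and to `0` otherwise (which makes it degree-preserving), and intertwines
polynomial multiplication with the deformed product. -/
theorem stmt_10 (N V : Type) [AddCommGroup N] [AddCommGroup V] [Module ℚ V]
    (n : ℕ) (bar : N →+ V) (b : Fin n → N) (w : Fin n → V)
    (hw : w = fun i => bar (b i))
    (Δ : Finset (Finset (Fin n)))
    (hind : ∀ S ∈ Δ, LinearIndependent ℚ fun i : S => w i.1)
    (hdown : ∀ S ∈ Δ, ∀ T ⊆ S, T ∈ Δ)
    (hglue : ∀ S ∈ Δ, ∀ T ∈ Δ, coneOf w S ∩ coneOf w T = coneOf w (S ∩ T))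
    (hcomplete : ∀ x : V, ∃ S ∈ Δ, x ∈ coneOf w S) :
    ∃ e : (MvPolynomial (Fin n) ℚ ⧸ srIdeal Δ) ≃ₗ[ℚ] ↥(SRing b Δ),
      (∀ p q : MvPolynomial (Fin n) ℚ ⧸ srIdeal Δ,
        (e (p * q) : N →₀ ℚ) = dmul bar w Δ (e p) (e q)) ∧
      (∀ k : Fin n → ℕ, (∃ S ∈ Δ, ∀ i, k i ≠ 0 → i ∈ S) →
        (e (Ideal.Quotient.mk (srIdeal Δ) (MvPolynomial.monomial (Finsupp.equivFunOnFinite.symm k) 1)) : N →₀ ℚ) =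
          Finsupp.single (∑ i, k i • b i) 1) ∧
      (∀ k : Fin n → ℕ, ¬(∃ S ∈ Δ, ∀ i, k i ≠ 0 → i ∈ S) →
        (e (Ideal.Quotient.mk (srIdeal Δ) (MvPolynomial.monomial (Finsupp.equivFunOnFinite.symm k) 1)) : N →₀ ℚ) = 0) := by
  classical
  set I := srIdeal Δ with hI
  set φ₀ := SR10.φ b Δ with hφ₀
  have hrange : ∀ x, φ₀ x ∈ SRing b Δ := SR10.φ_mem_SRing b Δ
  set ψ : MvPolynomial (Fin n) ℚ →ₗ[ℚ] SRing b Δ :=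
    φ₀.codRestrict (SRing b Δ) hrange with hψ
  have hψ_coe : ∀ x, ((ψ x : SRing b Δ) : N →₀ ℚ) = φ₀ x := fun x => rfl
  have hker : I.restrictScalars ℚ ≤ LinearMap.ker ψ := by
    intro x hx
    rw [LinearMap.mem_ker]
    exact Subtype.ext (by rw [hψ_coe]; exact SR10.srIdeal_le_ker b Δ hdown x hx)
  set lift := Submodule.liftQ (I.restrictScalars ℚ) ψ hker with hlift
  set eq1 := (Submodule.Quotient.restrictScalarsEquiv ℚ
      (I : Submodule (MvPolynomial (Fin n) ℚ) (MvPolynomial (Fin n) ℚ))).symm with heq1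
  set ebar : (MvPolynomial (Fin n) ℚ ⧸ I) →ₗ[ℚ] SRing b Δ :=
    lift ∘ₗ (eq1 : (MvPolynomial (Fin n) ℚ ⧸ I) →ₗ[ℚ] _) with hebar
  have hebar_mk : ∀ x, ebar (Ideal.Quotient.mk I x) = ψ x := by
    intro x
    rw [hebar]
    simp only [LinearMap.comp_apply, LinearEquiv.coe_coe, heq1]
    rw [← Ideal.Quotient.mk_eq_mk, Submodule.Quotient.restrictScalarsEquiv_symm_mk,
      hlift, Submodule.liftQ_apply]
  have hinj : Function.Injective ebar := by
    have h1 : Function.Injective lift := by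
      rw [← LinearMap.ker_eq_bot, hlift]
      refine Submodule.ker_liftQ_eq_bot _ _ _ ?_
      intro x hx
      rw [LinearMap.mem_ker] at hx
      have hx0 : φ₀ x = 0 := by rw [← hψ_coe x, hx]; rfl
      exact SR10.ker_le_srIdeal b Δ bar w hw hind hglue x hx0
    exact h1.comp eq1.injective
  have hsurj : Function.Surjective ebar := by
    intro y
    obtain ⟨x, hxy⟩ := SR10.SRing_le_range b Δ y.2
    exact ⟨Ideal.Quotient.mk I x, by rw [hebar_mk]; exact Subtype.ext (by rw [hψ_coe]; exact hxy)⟩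
  have hbij : Function.Bijective ebar := ⟨hinj, hsurj⟩
  refine ⟨LinearEquiv.ofBijective ebar hbij, ?_, ?_, ?_⟩
  · intro p q
    obtain ⟨x, rfl⟩ := Ideal.Quotient.mk_surjective p
    obtain ⟨y, rfl⟩ := Ideal.Quotient.mk_surjective q
    rw [← map_mul]
    simp only [LinearEquiv.ofBijective_apply]
    rw [hebar_mk, hebar_mk, hebar_mk, hψ_coe, hψ_coe, hψ_coe,
      SR10.dmul_eq_D bar w Δ]
    exact SR10.φ_mul bar b w Δ hw hind hglue x y
  · intro k hk
    simp only [LinearEquiv.ofBijective_apply]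
    rw [hebar_mk, hψ_coe, hφ₀, SR10.φ_symm_apply b Δ k, if_pos hk]
  · intro k hk
    simp only [LinearEquiv.ofBijective_apply]
    rw [hebar_mk, hψ_coe, hφ₀, SR10.φ_symm_apply b Δ k, if_neg hk]
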